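/- For R = 0 (so that B_1 = ⋯ = B_n = (0,0)), let M'_n(0) = {(C, J_1, …, J_n) ∈ M_n(0) : J_1 = (1,0)}, with the subspace topology. For θ ∈ ℝ let ρ_θ : ℝ² → ℝ² denote rotation about the origin by angle θ. Then the map Φ : S¹ × M'_n(0) → M_n(0) defined by Φ(e^{iθ}, (C, J_1, …, J_n)) = (ρ_θ C, ρ_θ J_1, …, ρ_θ J_n) is well defined and is a homeomorphism; in particular M_n(0) is homeomorphic to the product S¹ × M'_n(0). -/

import Mathlib

/-- Euclidean norm of a vector in ℝ². -/
noncomputable def enorm2 (v : ℝ × ℝ) : ℝ := Real.sqrt (v.1 ^ 2 + v.2 ^ 2)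

/-- The k-th fixed endpoint `B_k = (R cos(2kπ/n), R sin(2kπ/n))` (indices from 0). -/
noncomputable def Bpt (n : ℕ) (R : ℝ) (k : Fin n) : ℝ × ℝ :=
  (R * Real.cos (2 * (k.val : ℝ) * Real.pi / (n : ℝ)),
   R * Real.sin (2 * (k.val : ℝ) * Real.pi / (n : ℝ)))

/-- The configuration space `M_n(R)` of spiders with `n` arms of radius `R`,
as a subset of `(ℝ²)^{n+1} ≅ ℝ^{2n+2}`: a pair `(C, J)` with
`|C − J_k| = 1` and `|J_k − B_k| = 1` for all `k`. -/
noncomputable def MSpace (n : ℕ) (R : ℝ) : Set ((ℝ × ℝ) × (Fin n → ℝ × ℝ)) :=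
  {x | ∀ k : Fin n, enorm2 (x.1 - x.2 k) = 1 ∧ enorm2 (x.2 k - Bpt n R k) = 1}

/-- `d_n`, the maximum distance between `n`-th roots of unity. -/
noncomputable def dmax (n : ℕ) : ℝ :=
  if Even n then 2
  else Real.sqrt (2 - 2 * Real.cos (2 * ((n / 2 : ℕ) : ℝ) * Real.pi / (n : ℝ)))

/-- The critical radius `R_n = 2 / d_n`. -/
noncomputable def Rcrit (n : ℕ) : ℝ := 2 / dmax n

/-- Rotation of the plane `ℝ²` by a unit complex number `z = e^{iθ}`. -/
noncomputable def rotPt (z : Circle) (v : ℝ × ℝ) : ℝ × ℝ :=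
  ((z : ℂ).re * v.1 - (z : ℂ).im * v.2, (z : ℂ).im * v.1 + (z : ℂ).re * v.2)

/-- For `R = 0` (all endpoints at the origin), let `M'_n(0)` be the subspace of
`M_n(0)` where `J_1 = (1,0)`. Then the map
`Φ(e^{iθ}, (C, J_1, …, J_n)) = (ρ_θ C, ρ_θ J_1, …, ρ_θ J_n)` is well defined and a
homeomorphism `S¹ × M'_n(0) ≃ M_n(0)`. -/
noncomputable def toC (v : ℝ × ℝ) : ℂ := ⟨v.1, v.2⟩

lemma toC_eq (v : ℝ × ℝ) : toC v = (v.1 : ℂ) + (v.2 : ℂ) * Complex.I := by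
  simp [toC, Complex.ext_iff]

lemma enorm2_eq_abs (v : ℝ × ℝ) : enorm2 v = ‖toC v‖ := by
  simp [enorm2, toC, Complex.norm_def, Complex.normSq_apply]
  ring_nf

lemma toC_rotPt (z : Circle) (v : ℝ × ℝ) : toC (rotPt z v) = (z : ℂ) * toC v := by
  simp [rotPt, toC, Complex.ext_iff, Complex.mul_re, Complex.mul_im]
  all_goals ring

lemma toC_sub (v w : ℝ × ℝ) : toC (v - w) = toC v - toC w := by
  simp [toC, Complex.ext_iff]

lemma toC_inj {v w : ℝ × ℝ} (h : toC v = toC w) : v = w :=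
  Prod.ext (congrArg Complex.re h) (congrArg Complex.im h)

lemma enorm2_rot_sub (z : Circle) (v w : ℝ × ℝ) :
    enorm2 (rotPt z v - rotPt z w) = enorm2 (v - w) := by
  rw [enorm2_eq_abs, enorm2_eq_abs, toC_sub, toC_rotPt, toC_rotPt, ← mul_sub,
    norm_mul, Circle.norm_coe, one_mul, ← toC_sub]

lemma rotPt_rotPt (z w : Circle) (v : ℝ × ℝ) :
    rotPt z (rotPt w v) = rotPt (z * w) v := by
  apply toC_inj
  rw [toC_rotPt, toC_rotPt, toC_rotPt, Circle.coe_mul, mul_assoc]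

lemma rotPt_one (v : ℝ × ℝ) : rotPt 1 v = v := by
  simp [rotPt]

lemma rotPt_inv_cancel (z : Circle) (v : ℝ × ℝ) : rotPt z⁻¹ (rotPt z v) = v := by
  rw [rotPt_rotPt, inv_mul_cancel, rotPt_one]

lemma rotPt_cancel_inv (z : Circle) (v : ℝ × ℝ) : rotPt z (rotPt z⁻¹ v) = v := by
  rw [rotPt_rotPt, mul_inv_cancel, rotPt_one]

lemma Bpt_zero (n : ℕ) (k : Fin n) : Bpt n 0 k = (0, 0) := by simp [Bpt]

lemma continuous_rotPt : Continuous (fun p : Circle × (ℝ × ℝ) => rotPt p.1 p.2) := by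
  have h1 : Continuous fun p : Circle × (ℝ × ℝ) => ((p.1 : ℂ)) :=
    continuous_subtype_val.comp continuous_fst
  have hre := Complex.continuous_re.comp h1
  have him := Complex.continuous_im.comp h1
  exact Continuous.prodMk
    ((hre.mul (continuous_fst.comp continuous_snd)).sub
      (him.mul (continuous_snd.comp continuous_snd)))
    ((him.mul (continuous_fst.comp continuous_snd)).add
      (hre.mul (continuous_snd.comp continuous_snd)))

lemma continuous_toC : Continuous toC := by
  simp only [funext toC_eq]
  fun_prop

theorem stmt9 (n : ℕ) (hn : 2 ≤ n) :
    ∃ e : (Circle ×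
        {x : (ℝ × ℝ) × (Fin n → ℝ × ℝ) //
          x ∈ MSpace n 0 ∧ x.2 ⟨0, by omega⟩ = ((1 : ℝ), (0 : ℝ))}) ≃ₜ
        (MSpace n 0),
      ∀ (z : Circle)
        (x : {x : (ℝ × ℝ) × (Fin n → ℝ × ℝ) //
          x ∈ MSpace n 0 ∧ x.2 ⟨0, by omega⟩ = ((1 : ℝ), (0 : ℝ))}),
        ((e (z, x) : (ℝ × ℝ) × (Fin n → ℝ × ℝ))) =
          (rotPt z x.val.1, fun k => rotPt z (x.val.2 k)) := by
  have hrotmem : ∀ (z : Circle) (x : (ℝ × ℝ) × (Fin n → ℝ × ℝ)), x ∈ MSpace n 0 →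
      (rotPt z x.1, fun k => rotPt z (x.2 k)) ∈ MSpace n 0 := by
    intro z x hx k
    obtain ⟨h1, h2⟩ := hx k
    constructor
    · simpa using (enorm2_rot_sub z x.1 (x.2 k)) ▸ h1
    · rw [Bpt_zero] at h2 ⊢
      have : rotPt z (x.2 k) - (0, 0) = rotPt z (x.2 k) - rotPt z (0, 0) := by
        simp [rotPt]
      rw [this, enorm2_rot_sub]
      simpa using h2
  have hcirc : ∀ y : MSpace n 0, toC (y.val.2 ⟨0, by omega⟩) ∈ Metric.sphere (0:ℂ) 1 := by
    intro y
    have h := (y.2 ⟨0, by omega⟩).2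
    rw [Bpt_zero] at h
    rw [mem_sphere_zero_iff_norm, ← enorm2_eq_abs]
    simpa [Prod.mk_zero_zero] using h
  let zof : MSpace n 0 → Circle := fun y => ⟨toC (y.val.2 ⟨0, by omega⟩), hcirc y⟩
  have hcancel : ∀ (z : Circle) (x : (ℝ × ℝ) × (Fin n → ℝ × ℝ)),
      (rotPt z⁻¹ (rotPt z x.1), fun k => rotPt z⁻¹ (rotPt z (x.2 k))) = x :=
    fun z x => Prod.ext (rotPt_inv_cancel z x.1) (funext fun k => rotPt_inv_cancel z (x.2 k))
  have hcancel' : ∀ (z : Circle) (x : (ℝ × ℝ) × (Fin n → ℝ × ℝ)),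
      (rotPt z (rotPt z⁻¹ x.1), fun k => rotPt z (rotPt z⁻¹ (x.2 k))) = x :=
    fun z x => Prod.ext (rotPt_cancel_inv z x.1) (funext fun k => rotPt_cancel_inv z (x.2 k))
  refine ⟨{
    toFun := fun p => ⟨(rotPt p.1 p.2.val.1, fun k => rotPt p.1 (p.2.val.2 k)),
      hrotmem p.1 p.2.val p.2.2.1⟩
    invFun := fun y => (zof y,
      ⟨(rotPt (zof y)⁻¹ y.val.1, fun k => rotPt (zof y)⁻¹ (y.val.2 k)),
        hrotmem _ y.val y.2, by
          show rotPt (zof y)⁻¹ (y.val.2 ⟨0, by omega⟩) = (1, 0)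
          apply toC_inj
          rw [toC_rotPt]
          show ((zof y)⁻¹ : ℂ) * (zof y : ℂ) = toC (1, 0)
          rw [inv_mul_cancel₀ (Circle.coe_ne_zero _)]
          simp [toC, Complex.ext_iff]⟩)
    left_inv := by
      rintro ⟨z, x⟩
      have hz : zof ⟨(rotPt z x.val.1, fun k => rotPt z (x.val.2 k)),
          hrotmem z x.val x.2.1⟩ = z := by
        apply Circle.ext
        show toC (rotPt z (x.val.2 ⟨0, by omega⟩)) = z
        rw [toC_rotPt, x.2.2]
        simp [toC, Complex.ext_iff]
      simp only [hz]
      exact Prod.ext rfl (Subtype.ext (hcancel z x.val))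
    right_inv := by
      intro y
      exact Subtype.ext (hcancel' (zof y) y.val)
    continuous_toFun := by
      apply Continuous.subtype_mk
      refine Continuous.prodMk ?_ ?_
      · exact continuous_rotPt.comp
          (continuous_fst.prodMk
            ((continuous_fst.comp continuous_subtype_val).comp continuous_snd))
      · apply continuous_pi
        intro k
        exact continuous_rotPt.comp
          (continuous_fst.prodMk
            (((continuous_apply k).comp
              (continuous_snd.comp continuous_subtype_val)).comp continuous_snd))
    continuous_invFun := by
      have hzof : Continuous zof := by
        apply Continuous.subtype_mk
        exact continuous_toC.comp
          ((continuous_apply (⟨0, by omega⟩ : Fin n)).comp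
            (continuous_snd.comp continuous_subtype_val))
      have hzinv : Continuous fun y : MSpace n 0 => (zof y)⁻¹ :=
        continuous_inv.comp hzof
      refine Continuous.prodMk hzof ?_
      apply Continuous.subtype_mk
      refine Continuous.prodMk ?_ ?_
      · exact continuous_rotPt.comp
          (hzinv.prodMk (continuous_fst.comp continuous_subtype_val))
      · apply continuous_pi
        intro k
        exact continuous_rotPt.comp
          (hzinv.prodMk ((continuous_apply k).comp
            (continuous_snd.comp continuous_subtype_val))) }, ?_⟩
  intro z x
  rfl
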